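/- The space-time quadrature rule with weights: 1 on the cell average q̄ⁿ, −5/12 on each interface value at time tⁿ, 4/12 on each interface value at t^{n+1/2}, and 1/12 on each interface value at tⁿ⁺¹, computes the exact space-time average (1/(ΔtΔx))∫∫ q dx dt for every polynomial q(t,x) of total degree ≤ 2 in (t,x). -/
import Mathlib

open intervalIntegral in
lemma inner_int (a b c d e f t L : ℝ) :
    ∫ x in (-(L/2))..(L/2), (a + b*t + c*x + d*t^2 + e*t*x + f*x^2)
      = (a + b*t + d*t^2) * L + f * (L^3/12) := by
  have : (fun x : ℝ => a + b*t + c*x + d*t^2 + e*t*x + f*x^2)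
      = fun x : ℝ => (a + b*t + d*t^2) + (c + e*t)*x + f*x^2 := by
    funext x; ring
  rw [this]
  have h1 : IntervalIntegrable (fun x : ℝ => (a + b*t + d*t^2) + (c + e*t)*x) MeasureTheory.volume (-(L/2)) (L/2) :=
    ((continuous_const.add (continuous_const.mul continuous_id)).intervalIntegrable _ _)
  have h2 : IntervalIntegrable (fun x : ℝ => f*x^2) MeasureTheory.volume (-(L/2)) (L/2) :=
    ((continuous_const.mul (continuous_pow 2)).intervalIntegrable _ _)
  have h3 : IntervalIntegrable (fun x : ℝ => (c + e*t)*x) MeasureTheory.volume (-(L/2)) (L/2) :=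
    ((continuous_const.mul continuous_id).intervalIntegrable _ _)
  rw [integral_add (h1) h2, integral_add (intervalIntegrable_const) h3,
    integral_const, integral_const_mul, integral_const_mul, integral_id, integral_pow]
  simp [smul_eq_mul]; ring

/-- The 1D Active Flux space-time source quadrature (weights 1 on the average,
−5/12, 4/12, 1/12 on the interface values at times 0, Δt/2, Δt) is exact for
every polynomial q(t,x) of total degree ≤ 2. -/
theorem stmt_9 (Δx Δt : ℝ) (hΔx : 0 < Δx) (hΔt : 0 < Δt)
    (c00 c10 c01 c20 c11 c02 : ℝ) (q : ℝ → ℝ → ℝ)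
    (hq : q = fun t x => c00 + c10 * t + c01 * x + c20 * t ^ 2 + c11 * t * x + c02 * x ^ 2) :
    (1 / (Δt * Δx)) * ∫ t in (0:ℝ)..Δt, ∫ x in (-(Δx / 2))..(Δx / 2), q t x
      = ((1 / Δx) * ∫ x in (-(Δx / 2))..(Δx / 2), q 0 x)
        + (1 / 12) * (-5 * (q 0 (-(Δx / 2)) + q 0 (Δx / 2))
            + (q Δt (-(Δx / 2)) + q Δt (Δx / 2))
            + 4 * (q (Δt / 2) (-(Δx / 2)) + q (Δt / 2) (Δx / 2))) := by
  subst hq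
  simp only
  have hin : ∀ t : ℝ, (∫ x in (-(Δx/2))..(Δx/2),
      (c00 + c10*t + c01*x + c20*t^2 + c11*t*x + c02*x^2))
      = (c00 + c10*t + c20*t^2) * Δx + c02 * (Δx^3/12) :=
    fun t => inner_int c00 c10 c01 c20 c11 c02 t Δx
  rw [intervalIntegral.integral_congr (g := fun t =>
      (c00 + c10*t + c20*t^2) * Δx + c02 * (Δx^3/12)) (fun t _ => hin t)]
  have h0 := inner_int c00 c10 c01 c20 c11 c02 0 Δx
  simp only [mul_zero, zero_pow, ne_eq, OfNat.ofNat_ne_zero, not_false_eq_true] at h0 ⊢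
  rw [h0]
  have : (fun t : ℝ => (c00 + c10*t + c20*t^2) * Δx + c02 * (Δx^3/12))
      = fun t : ℝ => (c00*Δx + c02*(Δx^3/12)) + (c10*Δx)*t + (c20*Δx)*t^2 := by
    funext t; ring
  rw [this]
  have h1 : IntervalIntegrable (fun t : ℝ => (c00*Δx + c02*(Δx^3/12)) + (c10*Δx)*t) MeasureTheory.volume 0 Δt :=
    ((continuous_const.add (continuous_const.mul continuous_id)).intervalIntegrable _ _)
  have h2 : IntervalIntegrable (fun t : ℝ => (c20*Δx)*t^2) MeasureTheory.volume 0 Δt :=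
    ((continuous_const.mul (continuous_pow 2)).intervalIntegrable _ _)
  have h3 : IntervalIntegrable (fun t : ℝ => (c10*Δx)*t) MeasureTheory.volume 0 Δt :=
    ((continuous_const.mul continuous_id).intervalIntegrable _ _)
  rw [intervalIntegral.integral_add h1 h2, intervalIntegral.integral_add intervalIntegrable_const h3,
    intervalIntegral.integral_const, intervalIntegral.integral_const_mul,
    intervalIntegral.integral_const_mul, integral_id, integral_pow]
  field_simp
  ring
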